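/- Let q be a power of 2, let m ≥ 4 be an even integer, and let f be a non-degenerate quadratic form on F_{q^m} over F_q of Type I. Then for every integer r with 2 ≤ r ≤ m/2, there exists an (m−r)-dimensional F_q-subspace W of F_{q^m} such that the restriction of f to W has rank m−2r+2 and is of Type II; consequently, for every a ∈ F_q with a ≠ 0, |{x ∈ W : f(x) = a}| = q^{m−r−1} + q^{(m−4)/2}. -/

import Mathlib

noncomputable def qfKer {K V : Type*} [Field K] [AddCommGroup V] [Module K V]
    (f : QuadraticForm K V) : Submodule K V where
  carrier := {x | ∀ y, f (x + y) = f y}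
  zero_mem' := by intro y; rw [zero_add]
  add_mem' := by
    intro a b ha hb y
    rw [add_assoc, ha, hb]
  smul_mem' := by
    intro c x hx y
    have h0 : f x = 0 := by simpa using hx 0
    have hp : ∀ z, QuadraticMap.polar (⇑f) x z = 0 := by
      intro z
      simp [QuadraticMap.polar, hx z, h0]
    have h1 : f (c • x) = 0 := by
      rw [QuadraticMap.map_smul, h0]
      simp
    have hps : QuadraticMap.polar (⇑f) (c • x) y = 0 := by
      rw [QuadraticMap.polar_smul_left, hp y, smul_zero]
    have h2 : f (c • x + y) - f (c • x) - f y = 0 := hps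
    show f (c • x + y) = f y
    linear_combination h2 + h1

/-- Extend a coordinate vector `c : Fin d → K` by zero to all of `ℕ`. -/
def extc {K : Type*} [Zero K] {d : ℕ} (c : Fin d → K) (i : ℕ) : K :=
  if h : i < d then c ⟨i, h⟩ else 0

/-- A quadratic form of rank `t` on a `d`-dimensional space is of Type I if in some basis it is
`x₁x₂ + x₃x₄ + ⋯ + x_{t−1}x_t` (`t` even). -/
def IsTypeI (K V : Type*) [Field K] [AddCommGroup V] [Module K V] (d t : ℕ)
    (f : QuadraticForm K V) : Prop :=
  ∃ b : Module.Basis (Fin d) K V, ∀ c : Fin d → K,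
    f (∑ i, c i • b i) =
      ∑ j ∈ Finset.range (t / 2), extc c (2 * j) * extc c (2 * j + 1)

/-- A quadratic form of rank `t` on a `d`-dimensional space is of Type II if in some basis it is
`x₁x₂ + ⋯ + x_{t−3}x_{t−2} + αx_{t−1}² + x_{t−1}x_t + αx_t²` with `α` not of the form `u² + u`
(`t` even). -/
def IsTypeII (K V : Type*) [Field K] [AddCommGroup V] [Module K V] (d t : ℕ)
    (f : QuadraticForm K V) : Prop :=
  ∃ α : K, (∀ u : K, α ≠ u ^ 2 + u) ∧
    ∃ b : Module.Basis (Fin d) K V, ∀ c : Fin d → K,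
      f (∑ i, c i • b i) =
        (∑ j ∈ Finset.range (t / 2 - 1), extc c (2 * j) * extc c (2 * j + 1))
          + α * extc c (t - 2) ^ 2 + extc c (t - 2) * extc c (t - 1)
          + α * extc c (t - 1) ^ 2


set_option linter.unusedSectionVars false
set_option maxHeartbeats 1000000

section MyAux

section Basic
variable {K : Type*} [Field K]

lemma extc_lt {d : ℕ} (c : Fin d → K) {n : ℕ} (h : n < d) : extc c n = c ⟨n, h⟩ := dif_pos h

lemma extc_ge {d : ℕ} (c : Fin d → K) {n : ℕ} (h : d ≤ n) : extc c n = 0 := dif_neg (by omega)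

lemma extc_add {d : ℕ} (c c' : Fin d → K) (n : ℕ) :
    extc (c + c') n = extc c n + extc c' n := by
  unfold extc; split <;> simp

lemma extc_zero {d : ℕ} (n : ℕ) : extc (0 : Fin d → K) n = 0 := by
  unfold extc; split <;> simp

/-- The standard "partial elliptic" quadratic form in coordinates. -/
def Gform {K : Type*} [Field K] (α : K) (s : ℕ) {d : ℕ} (c : Fin d → K) : K :=
  (∑ j ∈ Finset.range s, extc c (2 * j) * extc c (2 * j + 1))
    + α * extc c (2 * s) ^ 2 + extc c (2 * s) * extc c (2 * s + 1)
    + α * extc c (2 * s + 1) ^ 2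

/-- The polar form of `Gform`. -/
def Bform {K : Type*} [Field K] (s : ℕ) {d : ℕ} (c c' : Fin d → K) : K :=
  (∑ j ∈ Finset.range s,
    (extc c (2 * j) * extc c' (2 * j + 1) + extc c (2 * j + 1) * extc c' (2 * j)))
    + (extc c (2 * s) * extc c' (2 * s + 1) + extc c (2 * s + 1) * extc c' (2 * s))

lemma Gform_zero (α : K) (s d : ℕ) : Gform α s (0 : Fin d → K) = 0 := by
  simp [Gform, extc_zero]

lemma Gform_add (h2 : (2 : K) = 0) (α : K) (s : ℕ) {d : ℕ} (c c' : Fin d → K) :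
    Gform α s (c + c') = Gform α s c + Gform α s c' + Bform s c c' := by
  have hsum : (∑ j ∈ Finset.range s, extc (c + c') (2 * j) * extc (c + c') (2 * j + 1))
      = (∑ j ∈ Finset.range s, extc c (2 * j) * extc c (2 * j + 1))
        + (∑ j ∈ Finset.range s, extc c' (2 * j) * extc c' (2 * j + 1))
        + (∑ j ∈ Finset.range s,
            (extc c (2 * j) * extc c' (2 * j + 1) + extc c (2 * j + 1) * extc c' (2 * j))) := by
    rw [← Finset.sum_add_distrib, ← Finset.sum_add_distrib]
    refine Finset.sum_congr rfl fun j _ => ?_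
    rw [extc_add, extc_add]; ring
  unfold Gform Bform
  rw [hsum, extc_add, extc_add]
  linear_combination (α * extc c (2*s) * extc c' (2*s) + α * extc c (2*s+1) * extc c' (2*s+1)) * h2

end Basic

section Count
variable {K : Type*} [Field K] [Fintype K] [DecidableEq K]

lemma sq_inj (h2 : (2 : K) = 0) : Function.Injective (fun x : K => x ^ 2) := by
  intro x y h
  simp only at h
  have h3 : (x - y) ^ 2 = 0 := by linear_combination h + (y ^ 2 - x * y) * h2
  have := pow_eq_zero_iff (n := 2) (by norm_num) |>.mp h3
  exact sub_eq_zero.mp this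

lemma sq_surj (h2 : (2 : K) = 0) : Function.Surjective (fun x : K => x ^ 2) :=
  Finite.injective_iff_surjective.mp (sq_inj h2)

lemma exists_alpha (h2 : (2 : K) = 0) : ∃ α : K, ∀ u : K, α ≠ u ^ 2 + u := by
  have hns : ¬ Function.Surjective (fun u : K => u ^ 2 + u) := by
    intro hs
    have hinj := Finite.injective_iff_surjective.mpr hs
    have h10 : (fun u : K => u ^ 2 + u) 1 = (fun u : K => u ^ 2 + u) 0 := by
      simp only
      linear_combination h2
    exact one_ne_zero (hinj h10)
  simp only [Function.Surjective, not_forall, not_exists] at hns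
  obtain ⟨α, hα⟩ := hns
  exact ⟨α, fun u h => hα u h.symm⟩

lemma aniso (h2 : (2 : K) = 0) {α : K} (hα : ∀ u : K, α ≠ u ^ 2 + u) {x y : K}
    (h : α * x ^ 2 + x * y + α * y ^ 2 = 0) : x = 0 ∧ y = 0 := by
  have hα0 : α ≠ 0 := fun h0 => hα 0 (by simpa using h0)
  have hy : y = 0 := by
    by_contra hy
    obtain ⟨w, hw⟩ : ∃ w : K, w = x * y⁻¹ := ⟨_, rfl⟩
    have hx : x = w * y := by rw [hw]; field_simp
    have heq : α * w ^ 2 + w + α = 0 := by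
      have hz : (α * w ^ 2 + w + α) * y ^ 2 = 0 := by
        rw [hx] at h; linear_combination h
      rcases mul_eq_zero.mp hz with h' | h'
      · exact h'
      · exact absurd (pow_eq_zero_iff (by norm_num) |>.mp h') hy
    have hw1 : w ≠ 1 := by
      intro h1
      rw [h1] at heq
      apply one_ne_zero (α := K)
      linear_combination heq - α * h2
    have hwm1 : w + 1 ≠ 0 := by
      intro h1
      apply hw1
      have hwn : w = -1 := eq_neg_of_add_eq_zero_left h1
      rw [hwn]
      linear_combination -h2
    apply hα (w / (w + 1))
    field_simp
    linear_combination heq + (α * w - w - w ^ 2) * h2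
  refine ⟨?_, hy⟩
  rw [hy] at h
  have hz : α * x ^ 2 = 0 := by linear_combination h
  rcases mul_eq_zero.mp hz with h' | h'
  · exact absurd h' hα0
  · exact pow_eq_zero_iff (by norm_num) |>.mp h'

/-- fiberwise counting over a product -/
lemma card_prod_fiber {β γ : Type*} [Fintype β] [Fintype γ] [DecidableEq β]
    (P : β × γ → Prop) [DecidablePred P] :
    (Finset.univ.filter P).card
      = ∑ x : β, (Finset.univ.filter fun y : γ => P (x, y)).card := by
  rw [Finset.card_eq_sum_card_fiberwise (f := Prod.fst) (t := Finset.univ) (fun x _ => Finset.mem_univ _)]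
  refine Finset.sum_congr rfl fun x _ => ?_
  refine Finset.card_bij' (fun p _ => p.2) (fun y _ => (x, y)) ?_ ?_ ?_ ?_
  · intro p hp
    simp only [Finset.mem_filter, Finset.mem_univ, true_and] at hp ⊢
    have hpe : (x, p.2) = p := Prod.ext hp.2.symm rfl
    rw [hpe]; exact hp.1
  · intro y hy
    simp only [Finset.mem_filter, Finset.mem_univ, true_and] at hy ⊢
    exact ⟨hy, trivial⟩
  · intro p hp
    simp only [Finset.mem_filter, Finset.mem_univ, true_and] at hp
    exact Prod.ext hp.2.symm rfl
  · intro y _; rfl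

lemma sum_card_fiber {β : Type*} [Fintype β] (g : β → K) :
    ∑ b : K, (Finset.univ.filter fun x => g x = b).card = Fintype.card β := by
  rw [← Finset.card_univ,
    Finset.card_eq_sum_card_fiberwise (f := g) (t := Finset.univ) (fun x _ => Finset.mem_univ _)]

/-- convolution formula -/
lemma card_convol {β γ : Type*} [Fintype β] [Fintype γ] [DecidableEq β]
    (g : β → K) (h : γ → K) (a : K) :
    (Finset.univ.filter fun p : β × γ => g p.1 + h p.2 = a).card
      = ∑ b : K, (Finset.univ.filter fun x => g x = b).card
          * (Finset.univ.filter fun y => h y = a - b).card := by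
  rw [card_prod_fiber]
  have h1 : ∀ x : β, (Finset.univ.filter fun y : γ => g x + h y = a).card
      = (Finset.univ.filter fun y : γ => h y = a - g x).card := by
    intro x
    congr 1
    apply Finset.filter_congr
    intro y _
    constructor
    · intro hh; rw [← hh]; ring
    · intro hh; rw [hh]; ring
  simp only [h1]
  rw [← Finset.sum_fiberwise (Finset.univ : Finset β) g
      (fun x => (Finset.univ.filter fun y : γ => h y = a - g x).card)]
  refine Finset.sum_congr rfl fun b _ => ?_
  calc ∑ x ∈ Finset.univ.filter (fun i => g i = b),
        (Finset.univ.filter fun y : γ => h y = a - g x).card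
      = ∑ _x ∈ Finset.univ.filter (fun i => g i = b),
        (Finset.univ.filter fun y : γ => h y = a - b).card := by
        refine Finset.sum_congr rfl fun x hx => ?_
        rw [(Finset.mem_filter.mp hx).2]
    _ = _ := by rw [Finset.sum_const, smul_eq_mul]

end Count
section Basic2
variable {K : Type*} [Field K]

def padEquiv (K : Type*) [Field K] (n : ℕ) : ((K × K) × (Fin n → K)) ≃ (Fin (n + 2) → K) where
  toFun p i := if h0 : (i : ℕ) = 0 then p.1.1 else if h1 : (i : ℕ) = 1 then p.1.2
    else p.2 ⟨(i : ℕ) - 2, by have := i.isLt; omega⟩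
  invFun g := ((g ⟨0, by omega⟩, g ⟨1, by omega⟩), fun j => g ⟨(j : ℕ) + 2, by omega⟩)
  left_inv p := rfl
  right_inv g := by
    funext i
    simp only
    split_ifs with h0 h1
    · exact congrArg g (Fin.ext h0.symm)
    · exact congrArg g (Fin.ext h1.symm)
    · exact congrArg g (Fin.ext (by simp; omega))

lemma pe0 {n : ℕ} (p : (K × K) × (Fin n → K)) : extc (padEquiv K n p) 0 = p.1.1 := by
  rw [extc_lt _ (by omega)]; rfl

lemma pe1 {n : ℕ} (p : (K × K) × (Fin n → K)) : extc (padEquiv K n p) 1 = p.1.2 := by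
  rw [extc_lt _ (by omega)]; rfl

lemma peshift {n : ℕ} (p : (K × K) × (Fin n → K)) (t : ℕ) :
    extc (padEquiv K n p) (t + 2) = extc p.2 t := by
  by_cases h : t < n
  · rw [extc_lt _ (by omega), extc_lt _ h]; rfl
  · rw [extc_ge _ (by omega), extc_ge _ (by omega)]

lemma Gform_pad (α : K) (s : ℕ) (p : (K × K) × (Fin (2 * s + 2) → K)) :
    Gform α (s + 1) (padEquiv K (2 * s + 2) p) = p.1.1 * p.1.2 + Gform α s p.2 := by
  unfold Gform
  rw [Finset.sum_range_succ']
  rw [Finset.sum_congr rfl (fun j (_ : j ∈ Finset.range s) => by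
    rw [show 2 * (j + 1) + 1 = (2 * j + 1) + 2 by ring, show 2 * (j + 1) = 2 * j + 2 by ring,
      peshift, peshift])]
  rw [show (2 * 0 : ℕ) = 0 from rfl, show (2 * 0 + 1 : ℕ) = 1 from rfl,
    show 2 * (s + 1) + 1 = (2 * s + 1) + 2 by ring, show 2 * (s + 1) = 2 * s + 2 by ring,
    peshift, peshift, pe0, pe1]
  ring

end Basic2

section Count2
variable {K : Type*} [Field K] [Fintype K] [DecidableEq K]
lemma ell_count (h2 : (2 : K) = 0) {α : K} (hα : ∀ u : K, α ≠ u ^ 2 + u) (a : K) :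
    (Finset.univ.filter fun p : K × K => α * p.1 ^ 2 + p.1 * p.2 + α * p.2 ^ 2 = a).card
      = if a = 0 then 1 else Fintype.card K + 1 := by
  have hN0 : (Finset.univ.filter
      fun p : K × K => α * p.1 ^ 2 + p.1 * p.2 + α * p.2 ^ 2 = (0 : K)).card = 1 := by
    rw [Finset.card_eq_one]
    refine ⟨(0, 0), ?_⟩
    ext p
    simp only [Finset.mem_filter, Finset.mem_univ, true_and, Finset.mem_singleton]
    constructor
    · intro hp
      obtain ⟨hx, hy⟩ := aniso h2 hα hp
      exact Prod.ext hx hy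
    · intro hp; rw [hp]; ring
  split_ifs with ha
  · rw [ha]; exact hN0
  · -- scaling invariance
    have hscale : ∀ b c : K, c ≠ 0 →
        (Finset.univ.filter fun p : K × K => α * p.1 ^ 2 + p.1 * p.2 + α * p.2 ^ 2 = b).card
        = (Finset.univ.filter fun p : K × K => α * p.1 ^ 2 + p.1 * p.2 + α * p.2 ^ 2 = c ^ 2 * b).card := by
      intro b c hc
      refine Finset.card_bij' (fun p _ => (c * p.1, c * p.2)) (fun p _ => (c⁻¹ * p.1, c⁻¹ * p.2))
        ?_ ?_ ?_ ?_
      · intro p hp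
        simp only [Finset.mem_filter, Finset.mem_univ, true_and] at hp ⊢
        rw [← hp]; ring
      · intro p hp
        simp only [Finset.mem_filter, Finset.mem_univ, true_and] at hp ⊢
        have hr : α * (c⁻¹ * p.1) ^ 2 + (c⁻¹ * p.1) * (c⁻¹ * p.2) + α * (c⁻¹ * p.2) ^ 2
            = c⁻¹ ^ 2 * (α * p.1 ^ 2 + p.1 * p.2 + α * p.2 ^ 2) := by ring
        rw [hr, hp]
        field_simp
      · intro p _; field_simp
      · intro p _; field_simp
    have hNall : ∀ b : K, b ≠ 0 →
        (Finset.univ.filter fun p : K × K => α * p.1 ^ 2 + p.1 * p.2 + α * p.2 ^ 2 = b).card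
        = (Finset.univ.filter fun p : K × K => α * p.1 ^ 2 + p.1 * p.2 + α * p.2 ^ 2 = a).card := by
      intro b hb
      obtain ⟨c, hc⟩ := sq_surj h2 (b * a⁻¹)
      simp only at hc
      have hc0 : c ≠ 0 := by
        intro h0
        rw [h0] at hc
        apply hb
        have : b * a⁻¹ = 0 := by rw [← hc]; ring
        rcases mul_eq_zero.mp this with h' | h'
        · exact h'
        · exact absurd (inv_eq_zero.mp h') ha
      have := hscale a c hc0
      rw [this]
      congr 2
      rw [hc]
      field_simp
    -- total count
    have htot : ∑ b : K, (Finset.univ.filter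
        fun p : K × K => α * p.1 ^ 2 + p.1 * p.2 + α * p.2 ^ 2 = b).card
        = Fintype.card K * Fintype.card K := by
      rw [sum_card_fiber (K := K)]
      exact Fintype.card_prod K K
    rw [← Finset.add_sum_erase _ _ (Finset.mem_univ (0 : K)), hN0] at htot
    rw [Finset.sum_congr rfl (fun b hb => hNall b (Finset.ne_of_mem_erase hb))] at htot
    rw [Finset.sum_const, smul_eq_mul, Finset.card_erase_of_mem (Finset.mem_univ _),
      Finset.card_univ] at htot
    obtain ⟨q', hq'⟩ : ∃ q', Fintype.card K = q' + 2 :=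
      ⟨Fintype.card K - 2, by have := Fintype.one_lt_card (α := K); omega⟩
    rw [hq'] at htot ⊢
    set N := (Finset.univ.filter fun p : K × K => α * p.1 ^ 2 + p.1 * p.2 + α * p.2 ^ 2 = a).card
    have h3 : (q' + 1) * N = (q' + 1) * (q' + 3) := by
      have h4 : q' + 2 - 1 = q' + 1 := by omega
      rw [h4] at htot
      nlinarith [htot]
    have := Nat.eq_of_mul_eq_mul_left (show 0 < q' + 1 by omega) h3
    omega

lemma hyp_count (b : K) :
    (Finset.univ.filter fun p : K × K => p.1 * p.2 = b).card
      = if b = 0 then 2 * Fintype.card K - 1 else Fintype.card K - 1 := by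
  rw [card_prod_fiber]
  have hin : ∀ x : K, (Finset.univ.filter fun y : K => x * y = b).card
      = if x = 0 then (if b = 0 then Fintype.card K else 0) else 1 := by
    intro x
    split_ifs with hx hb
    · rw [hx, hb]
      simp
    · rw [hx]
      rw [Finset.filter_false_of_mem (fun y _ => by
        simp only [zero_mul]
        exact fun h => hb h.symm)]
      simp
    · rw [Finset.card_eq_one]
      refine ⟨x⁻¹ * b, ?_⟩
      ext y
      simp only [Finset.mem_filter, Finset.mem_univ, true_and, Finset.mem_singleton]
      constructor
      · intro h; field_simp [← h]; linear_combination h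
      · intro h; rw [h]; field_simp
  rw [Finset.sum_congr rfl (fun x _ => hin x)]
  rw [← Finset.add_sum_erase _ _ (Finset.mem_univ (0 : K))]
  rw [if_pos rfl]
  rw [Finset.sum_congr rfl (fun x hx => if_neg (Finset.ne_of_mem_erase hx))]
  rw [Finset.sum_const, smul_eq_mul, Finset.card_erase_of_mem (Finset.mem_univ _),
    Finset.card_univ]
  have hq := Fintype.one_lt_card (α := K)
  split_ifs <;> omega

lemma count_G (h2 : (2 : K) = 0) {α : K} (hα : ∀ u : K, α ≠ u ^ 2 + u) (s : ℕ) (a : K)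
    (ha : a ≠ 0) :
    (Finset.univ.filter fun v : Fin (2 * s + 2) → K => Gform α s v = a).card
      = Fintype.card K ^ (2 * s + 1) + Fintype.card K ^ s := by
  induction s with
  | zero =>
    have he : ∀ v : Fin (2 * 0 + 2) → K,
        Gform α 0 v = α * v 0 ^ 2 + v 0 * v 1 + α * v 1 ^ 2 := by
      intro v
      unfold Gform
      rw [Finset.sum_range_zero, extc_lt v (show 2 * 0 < 2 * 0 + 2 by omega),
        extc_lt v (show 2 * 0 + 1 < 2 * 0 + 2 by omega)]
      norm_num
    rw [← Finset.card_equiv ((finTwoArrowEquiv K).symm) (fun p => ?_)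
      (t := Finset.univ.filter fun v : Fin (2 * 0 + 2) → K => Gform α 0 v = a)
      (s := Finset.univ.filter fun p : K × K =>
        α * p.1 ^ 2 + p.1 * p.2 + α * p.2 ^ 2 = a)]
    · rw [ell_count h2 hα a, if_neg ha]
      norm_num
    · simp only [Finset.mem_filter, Finset.mem_univ, true_and]
      rw [he ((finTwoArrowEquiv K).symm p)]
      simp [finTwoArrowEquiv]
  | succ s IH =>
    rw [show 2 * (s + 1) + 2 = (2 * s + 2) + 2 by ring]
    rw [← Finset.card_equiv (padEquiv K (2 * s + 2)) (fun p => ?_)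
      (t := Finset.univ.filter fun v : Fin (2 * s + 2 + 2) → K => Gform α (s + 1) v = a)
      (s := Finset.univ.filter fun p : (K × K) × (Fin (2 * s + 2) → K) =>
        p.1.1 * p.1.2 + Gform α s p.2 = a)]
    · rw [card_convol (K := K) (fun pp : K × K => pp.1 * pp.2) (Gform α s) a]
      rw [Finset.sum_congr rfl (fun b _ => by rw [hyp_count b])]
      rw [← Finset.add_sum_erase _ _ (Finset.mem_univ (0 : K))]
      rw [if_pos rfl, sub_zero]
      rw [Finset.sum_congr rfl (fun b hb => by
        rw [if_neg (Finset.ne_of_mem_erase hb)])]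
      rw [← Finset.mul_sum]
      rw [Finset.sum_nbij' (i := fun b => a - b) (j := fun x => a - x)
        (t := Finset.univ.erase a)
        (g := fun x => (Finset.univ.filter fun v : Fin (2 * s + 2) → K => Gform α s v = x).card)
        (fun b hb => Finset.mem_erase.mpr ⟨fun h => (Finset.ne_of_mem_erase hb)
          (by rwa [sub_eq_self] at h), Finset.mem_univ _⟩)
        (fun x hx => Finset.mem_erase.mpr ⟨fun h => (Finset.ne_of_mem_erase hx)
          ((sub_eq_zero.mp h).symm), Finset.mem_univ _⟩)
        (fun b _ => by ring) (fun x _ => by ring) (fun b _ => rfl)]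
      have heq : (Finset.univ.filter fun v : Fin (2 * s + 2) → K => Gform α s v = a).card
          + ∑ x ∈ Finset.univ.erase a,
            (Finset.univ.filter fun v : Fin (2 * s + 2) → K => Gform α s v = x).card
          = Fintype.card K ^ (2 * s + 2) := by
        have h5 := Finset.add_sum_erase Finset.univ
          (fun x : K => (Finset.univ.filter
            fun v : Fin (2 * s + 2) → K => Gform α s v = x).card) (Finset.mem_univ a)
        rw [h5, sum_card_fiber (K := K), Fintype.card_fun, Fintype.card_fin]
      rw [IH] at heq ⊢
      have hq := Fintype.one_lt_card (α := K)
      set q := Fintype.card K with hqdef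
      set S := ∑ x ∈ Finset.univ.erase a,
        (Finset.univ.filter fun v : Fin (2 * s + 2) → K => Gform α s v = x).card with hS
      zify [show 1 ≤ 2 * q by omega, show 1 ≤ q by omega] at heq ⊢
      linear_combination ((q:ℤ) - 1) * heq
    · simp only [Finset.mem_filter, Finset.mem_univ, true_and]
      rw [Gform_pad]
end Count2
section Basic3
variable {K : Type*} [Field K]

def resEquiv (K : Type*) [Field K] (n k : ℕ) : (Fin (n + k) → K) ≃ (Fin n → K) × (Fin k → K) where
  toFun c := (fun i => c ⟨i, by omega⟩, fun j => c ⟨n + (j : ℕ), by omega⟩)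
  invFun z i := if h : (i : ℕ) < n then z.1 ⟨i, h⟩
    else z.2 ⟨(i : ℕ) - n, by have := i.isLt; omega⟩
  left_inv c := by
    funext i
    simp only
    split_ifs with h
    · rfl
    · exact congrArg c (Fin.ext (by simp; omega))
  right_inv z := by
    refine Prod.ext (funext fun i => ?_) (funext fun j => ?_)
    · simp only
      rw [dif_pos (show ((⟨(i : ℕ), by omega⟩ : Fin (n + k)) : ℕ) < n by simp)]
    · simp only
      rw [dif_neg (show ¬ ((⟨n + (j : ℕ), by omega⟩ : Fin (n + k)) : ℕ) < n by simp)]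
      exact congrArg z.2 (Fin.ext (by simp))

lemma res_extc {n k : ℕ} (c : Fin (n + k) → K) {t : ℕ} (h : t < n) :
    extc ((resEquiv K n k c).1) t = extc c t := by
  rw [extc_lt _ h, extc_lt c (show t < n + k by omega)]
  rfl

lemma Gform_res (α : K) (s k : ℕ) (c : Fin (2 * s + 2 + k) → K) :
    Gform α s ((resEquiv K (2 * s + 2) k c).1) = Gform α s c := by
  unfold Gform
  rw [Finset.sum_congr rfl (fun j hj => by
    have hj' := Finset.mem_range.mp hj
    rw [res_extc c (show 2 * j < 2 * s + 2 by omega),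
      res_extc c (show 2 * j + 1 < 2 * s + 2 by omega)])]
  rw [res_extc c (show 2 * s < 2 * s + 2 by omega),
    res_extc c (show 2 * s + 1 < 2 * s + 2 by omega)]
end Basic3

section Count3
variable {K : Type*} [Field K] [Fintype K] [DecidableEq K]


lemma count_pad (α : K) (s k : ℕ) (a : K) :
    (Finset.univ.filter fun c : Fin (2 * s + 2 + k) → K => Gform α s c = a).card
      = (Finset.univ.filter fun v : Fin (2 * s + 2) → K => Gform α s v = a).card
        * Fintype.card K ^ k := by
  rw [Finset.card_equiv (resEquiv K (2 * s + 2) k) (fun c => ?_)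
    (t := Finset.univ.filter fun z : (Fin (2 * s + 2) → K) × (Fin k → K) =>
      Gform α s z.1 = a)]
  · rw [card_prod_fiber]
    rw [Finset.sum_congr rfl (fun v _ => show (Finset.univ.filter
        fun _ : Fin k → K => Gform α s v = a).card
        = if Gform α s v = a then Fintype.card K ^ k else 0 from by
      split_ifs with hv
      · rw [Finset.filter_true_of_mem (fun _ _ => hv), Finset.card_univ,
          Fintype.card_fun, Fintype.card_fin]
      · rw [Finset.filter_false_of_mem (fun _ _ => hv), Finset.card_empty])]
    rw [← Finset.sum_filter, Finset.sum_const, smul_eq_mul]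
  · simp only [Finset.mem_filter, Finset.mem_univ, true_and]
    rw [Gform_res]

lemma count_main (h2 : (2 : K) = 0) {α : K} (hα : ∀ u : K, α ≠ u ^ 2 + u) (s k : ℕ) (a : K)
    (ha : a ≠ 0) :
    Nat.card {c : Fin (2 * s + 2 + k) → K // Gform α s c = a}
      = Fintype.card K ^ (2 * s + 1 + k) + Fintype.card K ^ (s + k) := by
  rw [Nat.card_eq_fintype_card, Fintype.card_subtype]
  rw [count_pad α s k a, count_G h2 hα s a ha]
  ring
end Count3
section Basic4
variable {K : Type*} [Field K]

lemma extc_single [DecidableEq K] {d : ℕ} (i' : Fin d) (n : ℕ) :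
    extc (Pi.single i' (1 : K)) n = if n = (i' : ℕ) then 1 else 0 := by
  unfold extc
  split_ifs with h h1 h1
  · rw [Pi.single_apply, if_pos (Fin.ext h1)]
  · rw [Pi.single_apply, if_neg (fun hh => h1 (congrArg Fin.val hh))]
  · exact absurd h1 (by have := i'.isLt; omega)
  · rfl

lemma Gform_ker_iff [DecidableEq K] (h2 : (2 : K) = 0) (α : K) (s k : ℕ)
    (c : Fin (2 * s + 2 + k) → K) :
    (∀ c', Gform α s (c + c') = Gform α s c') ↔
      ∀ i : Fin (2 * s + 2 + k), (i : ℕ) < 2 * s + 2 → c i = 0 := by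
  constructor
  · intro H
    have hG0 : Gform α s c = 0 := by
      have h0 := H 0
      rw [add_zero] at h0
      rw [h0, Gform_zero]
    have hB : ∀ c', Bform s c c' = 0 := by
      intro c'
      have h1 := H c'
      rw [Gform_add h2] at h1
      linear_combination h1 - hG0
    intro i hi
    by_cases hpar : (i : ℕ) % 2 = 0
    · have hkey := hB (Pi.single ⟨(i : ℕ) + 1, by omega⟩ 1)
      unfold Bform at hkey
      simp only [extc_single, Fin.val_mk] at hkey
      by_cases hlt : (i : ℕ) < 2 * s
      · rw [Finset.sum_eq_single ((i : ℕ) / 2)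
          (fun j hj hne => by
            have := Finset.mem_range.mp hj
            rw [if_neg (by omega), if_neg (by omega)]; ring)
          (fun hh => absurd (Finset.mem_range.mpr (by omega)) hh)] at hkey
        rw [show 2 * ((i : ℕ) / 2) = (i : ℕ) by omega] at hkey
        rw [if_pos rfl, if_neg (by omega), if_neg (by omega), if_neg (by omega)] at hkey
        rw [extc_lt c (show (i : ℕ) < 2 * s + 2 + k by omega)] at hkey
        simpa using hkey
      · have hieq : (i : ℕ) = 2 * s := by omega
        rw [Finset.sum_eq_zero (fun j hj => by
          have := Finset.mem_range.mp hj
          rw [if_neg (by omega), if_neg (by omega)]; ring)] at hkey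
        rw [if_pos (by omega), if_neg (by omega)] at hkey
        rw [extc_lt c (show 2 * s < 2 * s + 2 + k by omega)] at hkey
        have hieq' : i = ⟨2 * s, by omega⟩ := Fin.ext hieq
        rw [hieq']
        simpa using hkey
    · have hkey := hB (Pi.single ⟨(i : ℕ) - 1, by omega⟩ 1)
      unfold Bform at hkey
      simp only [extc_single, Fin.val_mk] at hkey
      by_cases hlt : (i : ℕ) < 2 * s
      · rw [Finset.sum_eq_single ((i : ℕ) / 2)
          (fun j hj hne => by
            have := Finset.mem_range.mp hj
            rw [if_neg (by omega), if_neg (by omega)]; ring)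
          (fun hh => absurd (Finset.mem_range.mpr (by omega)) hh)] at hkey
        rw [show 2 * ((i : ℕ) / 2) + 1 = (i : ℕ) by omega] at hkey
        rw [if_neg (by omega), if_pos (by omega), if_neg (by omega), if_neg (by omega)] at hkey
        rw [extc_lt c (show (i : ℕ) < 2 * s + 2 + k by omega)] at hkey
        simpa using hkey
      · have hieq : (i : ℕ) = 2 * s + 1 := by omega
        rw [Finset.sum_eq_zero (fun j hj => by
          have := Finset.mem_range.mp hj
          rw [if_neg (by omega), if_neg (by omega)]; ring)] at hkey
        rw [if_neg (by omega), if_pos (by omega)] at hkey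
        rw [extc_lt c (show 2 * s + 1 < 2 * s + 2 + k by omega)] at hkey
        have hieq' : i = ⟨2 * s + 1, by omega⟩ := Fin.ext hieq
        rw [hieq']
        simpa using hkey
  · intro hz c'
    have hext : ∀ n, n < 2 * s + 2 → extc (c + c') n = extc c' n := by
      intro n hn
      rw [extc_add, extc_lt c (show n < 2 * s + 2 + k by omega),
        hz ⟨n, by omega⟩ hn, zero_add]
    unfold Gform
    rw [Finset.sum_congr rfl (fun j hj => by
      have := Finset.mem_range.mp hj
      rw [hext _ (by omega), hext _ (by omega)])]
    rw [hext _ (by omega), hext _ (by omega)]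
end Basic4
section Basic5
variable {K : Type*} [Field K]

/-- coefficient matrix embedding `(Fin (2s+2+k) → K) → (Fin (2s+2k+4) → K)` -/
def Afun (K : Type*) [Field K] (α : K) (s k : ℕ) :
    (Fin (2 * s + 2 + k) → K) →ₗ[K] (Fin (2 * s + 2 * k + 4) → K) :=
  LinearMap.pi (fun p =>
    if h0 : (p : ℕ) < 2 * s then LinearMap.proj ⟨p, by omega⟩
    else if h1 : (p : ℕ) = 2 * s then LinearMap.proj ⟨2 * s, by omega⟩
    else if h2 : (p : ℕ) = 2 * s + 1 then
      α • LinearMap.proj ⟨2 * s, by omega⟩ + LinearMap.proj ⟨2 * s + 1, by omega⟩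
    else if h3 : (p : ℕ) = 2 * s + 2 then LinearMap.proj ⟨2 * s + 1, by omega⟩
    else if h4 : (p : ℕ) = 2 * s + 3 then α • LinearMap.proj ⟨2 * s + 1, by omega⟩
    else if h5 : (p : ℕ) % 2 = 0 then
      LinearMap.proj ⟨2 * s + 2 + ((p : ℕ) - (2 * s + 4)) / 2, by have := p.isLt; omega⟩
    else 0)

variable (α : K) (s k : ℕ) (c : Fin (2 * s + 2 + k) → K)

lemma Afun_lt {n : ℕ} (h : n < 2 * s) : extc (Afun K α s k c) n = extc c n := by
  rw [extc_lt _ (show n < 2 * s + 2 * k + 4 by omega), extc_lt _ (show n < 2 * s + 2 + k by omega)]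
  simp only [Afun, LinearMap.pi_apply, Fin.val_mk]
  rw [dif_pos h]
  rfl

lemma Afun_2s : extc (Afun K α s k c) (2 * s) = extc c (2 * s) := by
  rw [extc_lt _ (show 2 * s < 2 * s + 2 * k + 4 by omega),
    extc_lt _ (show 2 * s < 2 * s + 2 + k by omega)]
  simp only [Afun, LinearMap.pi_apply, Fin.val_mk]
  rw [dif_neg (by omega), dif_pos trivial]
  simp

lemma Afun_2s1 : extc (Afun K α s k c) (2 * s + 1)
    = α * extc c (2 * s) + extc c (2 * s + 1) := by
  rw [extc_lt _ (show 2 * s + 1 < 2 * s + 2 * k + 4 by omega),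
    extc_lt _ (show 2 * s < 2 * s + 2 + k by omega),
    extc_lt _ (show 2 * s + 1 < 2 * s + 2 + k by omega)]
  simp only [Afun, LinearMap.pi_apply, Fin.val_mk]
  rw [dif_neg (by omega), dif_neg (by omega), dif_pos trivial]
  simp

lemma Afun_2s2 : extc (Afun K α s k c) (2 * s + 2) = extc c (2 * s + 1) := by
  rw [extc_lt _ (show 2 * s + 2 < 2 * s + 2 * k + 4 by omega),
    extc_lt _ (show 2 * s + 1 < 2 * s + 2 + k by omega)]
  simp only [Afun, LinearMap.pi_apply, Fin.val_mk]
  rw [dif_neg (by omega), dif_neg (by omega), dif_neg (by omega), dif_pos trivial]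
  simp

lemma Afun_2s3 : extc (Afun K α s k c) (2 * s + 3) = α * extc c (2 * s + 1) := by
  rw [extc_lt _ (show 2 * s + 3 < 2 * s + 2 * k + 4 by omega),
    extc_lt _ (show 2 * s + 1 < 2 * s + 2 + k by omega)]
  simp only [Afun, LinearMap.pi_apply, Fin.val_mk]
  rw [dif_neg (by omega), dif_neg (by omega), dif_neg (by omega), dif_neg (by omega),
    dif_pos trivial]
  simp

lemma Afun_odd {n : ℕ} (h4 : 2 * s + 4 ≤ n) (hodd : n % 2 = 1) :
    extc (Afun K α s k c) n = 0 := by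
  by_cases hn : n < 2 * s + 2 * k + 4
  · rw [extc_lt _ hn]
    simp only [Afun, LinearMap.pi_apply, Fin.val_mk]
    rw [dif_neg (by omega), dif_neg (by omega), dif_neg (by omega), dif_neg (by omega),
      dif_neg (by omega), dif_neg (by omega)]
    rfl
  · exact extc_ge _ (by omega)

lemma Afun_sum :
    ∑ j ∈ Finset.range (s + k + 2),
      extc (Afun K α s k c) (2 * j) * extc (Afun K α s k c) (2 * j + 1) = Gform α s c := by
  rw [← Finset.sum_subset (Finset.range_subset_range.mpr (show s + 2 ≤ s + k + 2 by omega))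
    (fun j hj hnj => by
      have h1 := Finset.mem_range.mp hj
      have h2 : s + 2 ≤ j := by
        by_contra hc
        exact hnj (Finset.mem_range.mpr (by omega))
      rw [Afun_odd α s k c (n := 2 * j + 1) (by omega) (by omega), mul_zero])]
  rw [Finset.sum_range_succ, Finset.sum_range_succ]
  rw [Finset.sum_congr rfl (fun j hj => by
    have := Finset.mem_range.mp hj
    rw [Afun_lt α s k c (show 2 * j < 2 * s by omega),
      Afun_lt α s k c (show 2 * j + 1 < 2 * s by omega)])]
  rw [show 2 * (s + 1) + 1 = 2 * s + 3 by ring, show 2 * (s + 1) = 2 * s + 2 by ring,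
    show 2 * s + 1 = 2 * s + 1 from rfl]
  rw [Afun_2s, Afun_2s1, Afun_2s2, Afun_2s3]
  unfold Gform
  ring

lemma Afun_pivot (i : Fin (2 * s + 2 + k)) :
    ∃ p : Fin (2 * s + 2 * k + 4), ∀ c : Fin (2 * s + 2 + k) → K, Afun K α s k c p = c i := by
  by_cases h1 : (i : ℕ) < 2 * s
  · refine ⟨⟨(i : ℕ), by omega⟩, fun c => ?_⟩
    simp only [Afun, LinearMap.pi_apply, Fin.val_mk]
    rw [dif_pos h1]
    exact congrArg c (Fin.ext rfl)
  · by_cases h2 : (i : ℕ) = 2 * s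
    · refine ⟨⟨2 * s, by omega⟩, fun c => ?_⟩
      simp only [Afun, LinearMap.pi_apply, Fin.val_mk]
      rw [dif_neg (by omega), dif_pos trivial]
      exact congrArg c (Fin.ext (by simp [h2]))
    · by_cases h3 : (i : ℕ) = 2 * s + 1
      · refine ⟨⟨2 * s + 2, by omega⟩, fun c => ?_⟩
        simp only [Afun, LinearMap.pi_apply, Fin.val_mk]
        rw [dif_neg (by omega), dif_neg (by omega), dif_neg (by omega), dif_pos trivial]
        exact congrArg c (Fin.ext (by simp [h3]))
      · refine ⟨⟨2 * (i : ℕ) - 2 * s, by have := i.isLt; omega⟩, fun c => ?_⟩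
        simp only [Afun, LinearMap.pi_apply, Fin.val_mk]
        rw [dif_neg (by omega), dif_neg (by omega), dif_neg (by omega), dif_neg (by omega),
          dif_neg (by omega), dif_pos (by omega)]
        exact congrArg c (Fin.ext (by simp; omega))

lemma Afun_inj : Function.Injective (Afun K α s k) := by
  intro c c' h
  funext i
  obtain ⟨p, hp⟩ := Afun_pivot α s k i
  rw [← hp c, ← hp c', h]
end Basic5
lemma aux (K L : Type*) [Field K] [Fintype K] [AddCommGroup L] [Module K L]
    (h2 : (2 : K) = 0) (α : K) (hα : ∀ u : K, α ≠ u ^ 2 + u)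
    (m s k : ℕ) (hm : m = 2 * s + 2 * k + 4)
    (f : QuadraticForm K L) (b : Module.Basis (Fin m) K L)
    (hb : ∀ c : Fin m → K, f (∑ i, c i • b i)
      = ∑ j ∈ Finset.range (m / 2), extc c (2 * j) * extc c (2 * j + 1)) :
    ∃ W : Submodule K L, Module.finrank K ↥W = 2 * s + 2 + k ∧
      Module.finrank K ↥W - Module.finrank K ↥(qfKer (f.comp W.subtype)) = 2 * s + 2 ∧
      IsTypeII K ↥W (Module.finrank K ↥W) (2 * s + 2) (f.comp W.subtype) ∧
      ∀ a : K, a ≠ 0 → Set.ncard {x : L | x ∈ W ∧ f x = a}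
        = Fintype.card K ^ (2 * s + 1 + k) + Fintype.card K ^ (s + k) := by
  subst hm
  classical
  have hb' : ∀ c : Fin (2 * s + 2 * k + 4) → K, f (∑ i, c i • b i)
      = ∑ j ∈ Finset.range (s + k + 2), extc c (2 * j) * extc c (2 * j + 1) := by
    intro c
    rw [hb c, show (2 * s + 2 * k + 4) / 2 = s + k + 2 by omega]
  set T : (Fin (2 * s + 2 + k) → K) →ₗ[K] L :=
    (b.equivFun.symm.toLinearMap).comp (Afun K α s k) with hT
  have hfT : ∀ c, f (T c) = Gform α s c := by
    intro c
    rw [hT]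
    simp only [LinearMap.comp_apply, LinearEquiv.coe_coe, Module.Basis.equivFun_symm_apply]
    rw [hb', Afun_sum]
  have hTinj : Function.Injective T := by
    intro c c' h
    rw [hT] at h
    simp only [LinearMap.comp_apply, LinearEquiv.coe_coe] at h
    exact Afun_inj α s k (b.equivFun.symm.injective h)
  set W := LinearMap.range T with hW
  set eW : (Fin (2 * s + 2 + k) → K) ≃ₗ[K] W := LinearEquiv.ofInjective T hTinj with heW
  have heWc : ∀ c, ((eW c : W) : L) = T c := fun c => LinearEquiv.ofInjective_apply T c
  have hrank : Module.finrank K W = 2 * s + 2 + k := by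
    rw [← eW.finrank_eq, Module.finrank_fin_fun]
  have hfW : ∀ c : Fin (2 * s + 2 + k) → K, (f.comp W.subtype) (eW c) = Gform α s c := by
    intro c
    rw [QuadraticMap.comp_apply, Submodule.subtype_apply, heWc, hfT]
  -- the kernel
  set π : (Fin (2 * s + 2 + k) → K) →ₗ[K] (Fin (2 * s + 2) → K) :=
    LinearMap.funLeft K K (Fin.castLE (by omega)) with hπ
  have hmemS : ∀ c, c ∈ LinearMap.ker π ↔
      ∀ i : Fin (2 * s + 2 + k), (i : ℕ) < 2 * s + 2 → c i = 0 := by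
    intro c
    rw [LinearMap.mem_ker]
    constructor
    · intro h i hi
      have h3 := congrFun h ⟨(i : ℕ), hi⟩
      simp only [hπ, LinearMap.funLeft_apply, Pi.zero_apply] at h3
      rw [← h3]
      exact congrArg c (Fin.ext rfl).symm
    · intro h
      funext j
      simp only [hπ, LinearMap.funLeft_apply, Pi.zero_apply]
      exact h (Fin.castLE (by omega) j) j.isLt
  have hkermem : ∀ x : W, x ∈ qfKer (f.comp W.subtype) ↔ eW.symm x ∈ LinearMap.ker π := by
    intro x
    have hmem0 : x ∈ qfKer (f.comp W.subtype) ↔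
        ∀ y : W, (f.comp W.subtype) (x + y) = (f.comp W.subtype) y := Iff.rfl
    rw [hmem0, hmemS, ← Gform_ker_iff h2 α s k]
    constructor
    · intro hx c'
      have hxe : eW (eW.symm x + c') = x + eW c' := by
        rw [map_add, LinearEquiv.apply_symm_apply]
      calc Gform α s (eW.symm x + c') = (f.comp W.subtype) (eW (eW.symm x + c')) :=
            (hfW _).symm
        _ = (f.comp W.subtype) (x + eW c') := by rw [hxe]
        _ = (f.comp W.subtype) (eW c') := hx _
        _ = Gform α s c' := hfW _
    · intro hx y
      have hxy : x + y = eW (eW.symm x + eW.symm y) := by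
        rw [map_add, LinearEquiv.apply_symm_apply, LinearEquiv.apply_symm_apply]
      rw [hxy, hfW, hx, ← hfW, LinearEquiv.apply_symm_apply]
  have hkerEq : qfKer (f.comp W.subtype) = (LinearMap.ker π).map (eW : _ →ₗ[K] W) := by
    ext x
    rw [hkermem x, Submodule.mem_map]
    constructor
    · intro h
      exact ⟨eW.symm x, h, by simp⟩
    · rintro ⟨c, hc, rfl⟩
      simpa using hc
  have hπsurj : Function.Surjective π := by
    rw [hπ]
    exact LinearMap.funLeft_surjective_of_injective K K _ (Fin.castLE_injective (by omega))
  have hkerrank : Module.finrank K (qfKer (f.comp W.subtype)) = k := by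
    rw [hkerEq]
    rw [LinearEquiv.finrank_map_eq eW (LinearMap.ker π)]
    have h5 := LinearMap.finrank_range_add_finrank_ker π
    rw [LinearMap.range_eq_top.mpr hπsurj, finrank_top, Module.finrank_fin_fun,
      Module.finrank_fin_fun] at h5
    omega
  -- the basis
  set bW : Module.Basis (Fin (2 * s + 2 + k)) K W := (Pi.basisFun K (Fin (2 * s + 2 + k))).map eW
    with hbW
  have hsum : ∀ c : Fin (2 * s + 2 + k) → K, ∑ i, c i • bW i = eW c := by
    intro c
    have h6 : ∑ i, c i • bW i = eW (∑ i, c i • Pi.basisFun K (Fin (2 * s + 2 + k)) i) := by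
      rw [map_sum]
      refine Finset.sum_congr rfl fun i _ => ?_
      rw [hbW, Module.Basis.map_apply, map_smul]
    rw [h6]
    congr 1
    conv_rhs => rw [← (Pi.basisFun K (Fin (2 * s + 2 + k))).sum_repr c]
    refine Finset.sum_congr rfl fun i _ => ?_
    rw [Pi.basisFun_repr]
  refine ⟨W, hrank, by rw [hrank, hkerrank]; omega, ?_, ?_⟩
  · rw [hrank]
    refine ⟨α, hα, bW, fun c => ?_⟩
    rw [hsum c, hfW c]
    rw [show (2 * s + 2) / 2 - 1 = s by omega, show 2 * s + 2 - 2 = 2 * s by omega,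
      show 2 * s + 2 - 1 = 2 * s + 1 by omega]
    rfl
  · intro a ha
    rw [← Nat.card_coe_set_eq]
    have e : {c : Fin (2 * s + 2 + k) → K // Gform α s c = a} ≃
        ↥{x : L | x ∈ W ∧ f x = a} := by
      refine Equiv.ofBijective (fun c => ⟨T c.1, ⟨⟨c.1, rfl⟩, by rw [hfT]; exact c.2⟩⟩)
        ⟨?_, ?_⟩
      · intro c c' h
        exact Subtype.ext (hTinj (congrArg Subtype.val h))
      · rintro ⟨x, hxW, hxa⟩
        obtain ⟨c, rfl⟩ := hxW
        exact ⟨⟨c, by rw [← hfT]; exact hxa⟩, rfl⟩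
    rw [← Nat.card_congr e]
    exact count_main h2 hα s k a ha

end MyAux

/-- For a non-degenerate Type I form `f` on `F_{q^m}` (`m ≥ 4` even) and `2 ≤ r ≤ m/2`, there
is an `(m−r)`-dimensional subspace on which `f` restricts to a Type II form of rank `m−2r+2`;
on it the equation `f(x) = a` (`a ≠ 0`) has `q^(m−r−1) + q^((m−4)/2)` solutions. -/
theorem exists_subspace_typeII_restriction (q m r : ℕ) (hq : ∃ e : ℕ, 0 < e ∧ q = 2 ^ e) (hm : 4 ≤ m) (hme : Even m)
    (K L : Type) [Field K] [Fintype K] [Field L] [Fintype L] [Algebra K L]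
    (hcard : Fintype.card K = q) (hcardL : Fintype.card L = q ^ m)
    (hrank : Module.finrank K L = m)
    (f : QuadraticForm K L)
    (hnd : ∀ x : L, (∀ y, f (x + y) = f y) → x = 0)
    (hI : IsTypeI K L m m f)
    (hr1 : 2 ≤ r) (hr2 : r ≤ m / 2) :
    ∃ W : Submodule K L, Module.finrank K ↥W = m - r ∧
      Module.finrank K ↥W - Module.finrank K ↥(qfKer (f.comp W.subtype)) = m - 2 * r + 2 ∧
      IsTypeII K ↥W (Module.finrank K ↥W) (m - 2 * r + 2) (f.comp W.subtype) ∧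
      ∀ a : K, a ≠ 0 →
        Set.ncard {x : L | x ∈ W ∧ f x = a} = q ^ (m - r - 1) + q ^ ((m - 4) / 2) := by
  classical
  obtain ⟨e, he, hqe⟩ := hq
  have h2 : (2 : K) = 0 := by
    have hcast := FiniteField.cast_card_eq_zero K
    rw [hcard, hqe] at hcast
    have h2e : ((2 : K)) ^ e = 0 := by push_cast at hcast; exact_mod_cast hcast
    exact pow_eq_zero_iff (by omega) |>.mp h2e
  obtain ⟨α, hα⟩ := exists_alpha h2
  obtain ⟨b, hb⟩ := hI
  have hme' : m % 2 = 0 := Nat.even_iff.mp hme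
  set s := m / 2 - r with hs
  set k := r - 2 with hk
  have hm' : m = 2 * s + 2 * k + 4 := by omega
  obtain ⟨W, hw1, hw2, hw3, hw4⟩ := aux K L h2 α hα m s k hm' f b hb
  refine ⟨W, by rw [hw1]; omega, ?_, ?_, ?_⟩
  · rw [show m - 2 * r + 2 = 2 * s + 2 by omega]
    exact hw2
  · rw [show m - 2 * r + 2 = 2 * s + 2 by omega]
    exact hw3
  · intro a ha
    rw [hw4 a ha, ← hcard, show m - r - 1 = 2 * s + 1 + k by omega,
      show (m - 4) / 2 = s + k by omega]
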